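/- Let ξ : ℝ² → ℝ be C^p, let u⁽⁰⁾, …, u⁽ᵖ⁾ ∈ ℝ, and define the jet total derivative D = ∂_x + ∑_{J=0}^{p-1} u⁽ᴶ⁺¹⁾ ∂_{u⁽ᴶ⁾}. Then for every l ≤ p, ( ∑_{J} u⁽ᴶ⁺¹⁾ ∂_{u⁽ᴶ⁾} )^l ξ(x, u⁽⁰⁾) = ∑_{n=0}^{l} (l!/n!) L^{(l)}_{(n)} (∂_u)^n ξ(x, u⁽⁰⁾), where L^{(l)}_{(n)} = ∑_{l₁+⋯+l_n=l, lᵢ≥1} ∏ u⁽ˡⁱ⁾/lᵢ! and L^{(l)}_{(0)} = δ_{l,0}. -/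

import Mathlib

open Finset

/-- Jet variables: `none` is `x`, `some J` is `u⁽ᴶ⁾`. The shift derivation
`∑_J u⁽ᴶ⁺¹⁾ ∂_{u⁽ᴶ⁾}`. -/
noncomputable def shiftS' : Derivation ℝ (MvPolynomial (Option ℕ) ℝ) (MvPolynomial (Option ℕ) ℝ) :=
  MvPolynomial.mkDerivation ℝ (fun v =>
    match v with
    | none => 0
    | some J => MvPolynomial.X (some (J + 1)))

/-- The partial derivative `∂_u = ∂_{u⁽⁰⁾}`. -/
noncomputable def partialU : Derivation ℝ (MvPolynomial (Option ℕ) ℝ) (MvPolynomial (Option ℕ) ℝ) :=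
  MvPolynomial.mkDerivation ℝ (fun v =>
    match v with
    | some 0 => 1
    | _ => 0)

/-- `L^{(l)}_{(n)} = ∑_{l₁+⋯+l_n=l, lᵢ≥1} ∏ᵢ u⁽ˡⁱ⁾/lᵢ!` as a polynomial in the jet
variables (with `L^{(l)}_{(0)} = δ_{l,0}`). -/
noncomputable def LpolyJet (l n : ℕ) : MvPolynomial (Option ℕ) ℝ :=
  ∑ f ∈ (Finset.Nat.antidiagonalTuple n l).filter (fun f => ∀ i, 1 ≤ f i),
    ∏ i, (MvPolynomial.C ((Nat.factorial (f i) : ℝ)⁻¹) * MvPolynomial.X (some (f i)))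


open MvPolynomial

abbrev MP := MvPolynomial (Option ℕ) ℝ

lemma shiftS'_X_none : shiftS' (X none) = 0 := by
  simp [shiftS', mkDerivation_X]

lemma shiftS'_X_some (J : ℕ) : shiftS' (X (some J)) = X (some (J + 1)) := by
  simp [shiftS', mkDerivation_X]

lemma partialU_X_none : partialU (X none) = 0 := by
  simp [partialU, mkDerivation_X]

lemma partialU_X_some0 : partialU (X (some 0)) = 1 := by
  simp [partialU, mkDerivation_X]

lemma deriv_C (D : Derivation ℝ MP MP) (c : ℝ) : D (C c) = 0 := by
  have : (C c : MP) = algebraMap ℝ MP c := rfl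
  rw [this, Derivation.map_algebraMap]

lemma deriv_prod {ι : Type*} [DecidableEq ι] (D : Derivation ℝ MP MP) (s : Finset ι)
    (f : ι → MP) :
    D (∏ i ∈ s, f i) = ∑ i ∈ s, (∏ j ∈ s.erase i, f j) * D (f i) := by
  induction s using Finset.induction_on with
  | empty => simp
  | insert a s ha ih =>
    rw [Finset.prod_insert ha, Derivation.leibniz, smul_eq_mul, smul_eq_mul,
      Finset.sum_insert ha, Finset.erase_insert ha, ih, Finset.mul_sum]
    rw [add_comm]
    congr 1
    apply Finset.sum_congr rfl
    intro i hi
    rw [Finset.erase_insert_of_ne (by rintro rfl; exact ha hi),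
      Finset.prod_insert (fun h => ha (Finset.mem_of_mem_erase h)), mul_assoc]

noncomputable abbrev adj : Subalgebra ℝ MP :=
  Algebra.adjoin ℝ ({X none, X (some 0)} : Set MP)

lemma partialU_mem_adj {η : MP} (h : η ∈ adj) : partialU η ∈ adj := by
  induction h using Algebra.adjoin_induction with
  | mem x hx =>
    rcases hx with hx | hx
    · rw [hx, partialU_X_none]; exact zero_mem _
    · rw [Set.mem_singleton_iff.mp hx, partialU_X_some0]; exact one_mem _
  | algebraMap r => rw [Derivation.map_algebraMap]; exact zero_mem _
  | add x y hx hy ihx ihy => rw [map_add]; exact add_mem ihx ihy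
  | mul x y hx hy ihx ihy =>
    rw [Derivation.leibniz, smul_eq_mul, smul_eq_mul]
    exact add_mem (mul_mem hx ihy) (mul_mem hy ihx)

lemma shiftS'_eq_on_adj {η : MP} (h : η ∈ adj) :
    shiftS' η = X (some 1) * partialU η := by
  induction h using Algebra.adjoin_induction with
  | mem x hx =>
    rcases hx with hx | hx
    · rw [hx, partialU_X_none, shiftS'_X_none, mul_zero]
    · rw [Set.mem_singleton_iff.mp hx, partialU_X_some0, shiftS'_X_some, mul_one]
  | algebraMap r => rw [Derivation.map_algebraMap, Derivation.map_algebraMap, mul_zero]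
  | add x y hx hy ihx ihy => rw [map_add, map_add, ihx, ihy, mul_add]
  | mul x y hx hy ihx ihy =>
    rw [Derivation.leibniz, Derivation.leibniz, smul_eq_mul, smul_eq_mul, smul_eq_mul,
      smul_eq_mul, ihx, ihy]
    ring

lemma partialU_pow_mem_adj {η : MP} (h : η ∈ adj) (n : ℕ) :
    (partialU.toLinearMap ^ n) η ∈ adj := by
  induction n with
  | zero => simpa using h
  | succ n ih => rw [pow_succ', Module.End.mul_apply]; exact partialU_mem_adj ih

lemma Lpoly_zero_zero : LpolyJet 0 0 = 1 := by
  unfold LpolyJet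
  rw [Finset.Nat.antidiagonalTuple_zero_zero]
  rw [Finset.filter_singleton]
  simp [Fin.elim0]

lemma Lpoly_succ_zero (l : ℕ) : LpolyJet (l + 1) 0 = 0 := by
  unfold LpolyJet
  rw [Finset.Nat.antidiagonalTuple_zero_succ]
  simp

lemma Lpoly_eq_zero_of_lt {l n : ℕ} (h : l < n) : LpolyJet l n = 0 := by
  unfold LpolyJet
  have he : (Finset.Nat.antidiagonalTuple n l).filter (fun f => ∀ i, 1 ≤ f i) = ∅ := by
    rw [Finset.filter_eq_empty_iff]
    intro f hf hall
    have h1 : ∑ i, f i = l := Finset.Nat.mem_antidiagonalTuple.mp hf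
    have h2 : (n : ℕ) ≤ ∑ i : Fin n, f i := by
      calc (n : ℕ) = ∑ _i : Fin n, 1 := by simp
      _ ≤ ∑ i, f i := Finset.sum_le_sum fun i _ => hall i
    omega
  rw [he]
  simp

noncomputable def Pp {k : ℕ} (f : Fin k → ℕ) : MP :=
  ∏ i, (MvPolynomial.C ((Nat.factorial (f i) : ℝ)⁻¹) * MvPolynomial.X (some (f i)))

def sset (k m : ℕ) : Finset (Fin k → ℕ) :=
  (Finset.Nat.antidiagonalTuple k m).filter (fun f => ∀ i, 1 ≤ f i)

lemma Lpoly_eq (l n : ℕ) : LpolyJet l n = ∑ f ∈ sset n l, Pp f := rfl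

lemma mem_sset {k m : ℕ} {f : Fin k → ℕ} :
    f ∈ sset k m ↔ (∑ i, f i = m ∧ ∀ i, 1 ≤ f i) := by
  simp [sset, Finset.mem_filter, Finset.Nat.mem_antidiagonalTuple]

lemma shiftS'_CX (c : ℝ) (m : ℕ) :
    shiftS' (C c * X (some m)) = C c * X (some (m + 1)) := by
  rw [Derivation.leibniz, shiftS'_X_some, deriv_C, smul_eq_mul, smul_eq_mul, mul_zero, add_zero]

lemma fact_coeff (m : ℕ) :
    ((m + 1 : ℕ) : ℝ) * ((Nat.factorial (m + 1) : ℝ))⁻¹ = ((Nat.factorial m : ℝ))⁻¹ := by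
  have h : ((Nat.factorial (m + 1) : ℝ)) = ((m + 1 : ℕ) : ℝ) * (Nat.factorial m : ℝ) := by
    rw [Nat.factorial_succ]; push_cast; ring
  have h1 : ((m + 1 : ℕ) : ℝ) ≠ 0 := by positivity
  have h2 : (Nat.factorial m : ℝ) ≠ 0 := Nat.cast_ne_zero.mpr (Nat.factorial_ne_zero m)
  field_simp [h]
  exact h.symm

lemma Lpoly_rec (l n : ℕ) :
    C ((l : ℝ) + 1) * LpolyJet (l + 1) (n + 1)
      = shiftS' (LpolyJet l (n + 1))
        + C ((n : ℝ) + 1) * (X (some 1) * LpolyJet l n) := by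
  classical
  rw [Lpoly_eq, Lpoly_eq, Lpoly_eq]
  -- abbreviate the "derivative at slot j" term
  set A : (Fin (n+1) → ℕ) → Fin (n+1) → MP := fun f j =>
    (∏ i ∈ Finset.univ.erase j, (C ((Nat.factorial (f i) : ℝ)⁻¹) * X (some (f i)))) *
      (C ((Nat.factorial (f j) : ℝ)⁻¹) * X (some (f j + 1))) with hA
  have step1 :
      C ((l : ℝ) + 1) * ∑ g ∈ sset (n+1) (l+1), Pp g
        = ∑ j : Fin (n+1), ∑ g ∈ sset (n+1) (l+1), C ((g j : ℝ)) * Pp g := by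
    rw [Finset.mul_sum, Finset.sum_comm]
    refine Finset.sum_congr rfl fun g hg => ?_
    obtain ⟨h1, _⟩ := mem_sset.mp hg
    rw [← Finset.sum_mul]
    congr 1
    have hcast : ((l : ℝ) + 1) = ∑ j, ((g j : ℕ) : ℝ) := by
      rw [← Nat.cast_sum, h1]; push_cast; ring
    rw [hcast, map_sum]
  rw [step1]
  have split : ∀ j : Fin (n+1),
      ∑ g ∈ sset (n+1) (l+1), C ((g j : ℝ)) * Pp g
        = (∑ f ∈ sset (n+1) l, A f j) + X (some 1) * ∑ f ∈ sset n l, Pp f := by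
    intro j
    rw [← Finset.sum_filter_add_sum_filter_not (sset (n+1) (l+1)) (fun g => g j = 1)]
    rw [add_comm]
    congr 1
    · -- Part A : g j ≥ 2
      refine Finset.sum_nbij' (fun g => Function.update g j (g j - 1))
        (fun f => Function.update f j (f j + 1)) ?_ ?_ ?_ ?_ ?_
      · intro g hg
        rw [Finset.mem_filter] at hg
        obtain ⟨hg1, hg2⟩ := hg
        obtain ⟨hsum, hpos⟩ := mem_sset.mp hg1
        have hgj : 2 ≤ g j := by have := hpos j; omega
        apply mem_sset.mpr
        constructor
        · rw [Finset.sum_update_of_mem (Finset.mem_univ j)]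
          rw [Finset.sdiff_singleton_eq_erase]
          have := Finset.add_sum_erase Finset.univ g (Finset.mem_univ j)
          omega
        · intro i
          by_cases hij : i = j
          · subst hij; simp [Function.update_self]; omega
          · simp [Function.update_of_ne hij]; exact hpos i
      · intro f hf
        obtain ⟨hsum, hpos⟩ := mem_sset.mp hf
        rw [Finset.mem_filter]
        refine ⟨mem_sset.mpr ⟨?_, ?_⟩, ?_⟩
        · rw [Finset.sum_update_of_mem (Finset.mem_univ j)]
          rw [Finset.sdiff_singleton_eq_erase]
          have := Finset.add_sum_erase Finset.univ f (Finset.mem_univ j)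
          omega
        · intro i
          by_cases hij : i = j
          · subst hij; simp [Function.update_self]
          · simp [Function.update_of_ne hij]; exact hpos i
        · intro hcontra
          simp only [Function.update_self] at hcontra
          have := hpos j; omega
      · intro g hg
        rw [Finset.mem_filter] at hg
        obtain ⟨hg1, hg2⟩ := hg
        obtain ⟨_, hpos⟩ := mem_sset.mp hg1
        have hgj : 1 ≤ g j := hpos j
        funext i
        by_cases hij : i = j
        · subst hij; simp [Function.update_self]; omega
        · simp [Function.update_of_ne hij]
      · intro f hf
        funext i
        by_cases hij : i = j
        · subst hij; simp [Function.update_self]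
        · simp [Function.update_of_ne hij]
      · intro g hg
        rw [Finset.mem_filter] at hg
        obtain ⟨hg1, hg2⟩ := hg
        obtain ⟨_, hpos⟩ := mem_sset.mp hg1
        have hgj : 2 ≤ g j := by have := hpos j; omega
        rw [hA]
        simp only
        -- term equality
        have hPg : Pp g = (C ((Nat.factorial (g j) : ℝ)⁻¹) * X (some (g j))) *
            ∏ i ∈ Finset.univ.erase j, (C ((Nat.factorial (g i) : ℝ)⁻¹) * X (some (g i))) :=
          (Finset.mul_prod_erase Finset.univ _ (Finset.mem_univ j)).symm
        rw [hPg]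
        have herase : ∏ i ∈ Finset.univ.erase j,
            (C ((Nat.factorial (Function.update g j (g j - 1) i) : ℝ)⁻¹) *
              X (some (Function.update g j (g j - 1) i)))
            = ∏ i ∈ Finset.univ.erase j,
              (C ((Nat.factorial (g i) : ℝ)⁻¹) * X (some (g i))) := by
          refine Finset.prod_congr rfl fun i hi => ?_
          rw [Function.update_of_ne (Finset.ne_of_mem_erase hi)]
        rw [herase, Function.update_self]
        have hj1 : g j - 1 + 1 = g j := by omega
        rw [hj1]
        have hc : (C ((g j : ℕ) : ℝ) : MP) * C ((Nat.factorial (g j) : ℝ)⁻¹)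
            = C ((Nat.factorial (g j - 1) : ℝ)⁻¹) := by
          rw [← map_mul]
          congr 1
          have := fact_coeff (g j - 1)
          rw [hj1] at this
          exact this
        calc C ((g j : ℕ) : ℝ) * ((C ((Nat.factorial (g j) : ℝ)⁻¹) * X (some (g j))) *
              ∏ i ∈ Finset.univ.erase j, (C ((Nat.factorial (g i) : ℝ)⁻¹) * X (some (g i))))
            = (∏ i ∈ Finset.univ.erase j, (C ((Nat.factorial (g i) : ℝ)⁻¹) * X (some (g i)))) *
              ((C ((g j : ℕ) : ℝ) * C ((Nat.factorial (g j) : ℝ)⁻¹)) * X (some (g j))) := by ring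
          _ = _ := by rw [hc]
    · -- Part B : g j = 1
      have hterm : ∀ g ∈ (sset (n+1) (l+1)).filter (fun g => g j = 1),
          C ((g j : ℝ)) * Pp g = X (some 1) * Pp (j.removeNth g) := by
        intro g hg
        rw [Finset.mem_filter] at hg
        have hgj : g j = 1 := hg.2
        have hPg : Pp g = (C ((Nat.factorial (g j) : ℝ)⁻¹) * X (some (g j))) *
            ∏ i : Fin n, (C ((Nat.factorial (g (j.succAbove i)) : ℝ)⁻¹) *
              X (some (g (j.succAbove i)))) :=
          Fin.prod_univ_succAbove _ j
        rw [hPg, hgj]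
        have : Pp (j.removeNth g) = ∏ i : Fin n,
            (C ((Nat.factorial (g (j.succAbove i)) : ℝ)⁻¹) * X (some (g (j.succAbove i)))) := rfl
        rw [this]
        norm_num
      rw [Finset.sum_congr rfl hterm]
      rw [← Finset.mul_sum]
      congr 1
      refine Finset.sum_nbij' (fun g => j.removeNth g) (fun f => j.insertNth 1 f) ?_ ?_ ?_ ?_ ?_
      · intro g hg
        rw [Finset.mem_filter] at hg
        obtain ⟨hg1, hgj⟩ := hg
        obtain ⟨hsum, hpos⟩ := mem_sset.mp hg1
        apply mem_sset.mpr
        constructor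
        · have := Fin.sum_univ_succAbove g j
          simp only [Fin.removeNth]
          omega
        · intro i; exact hpos _
      · intro f hf
        obtain ⟨hsum, hpos⟩ := mem_sset.mp hf
        rw [Finset.mem_filter]
        refine ⟨mem_sset.mpr ⟨?_, ?_⟩, ?_⟩
        · rw [Fin.sum_univ_succAbove _ j]
          simp [Fin.insertNth_apply_same, Fin.insertNth_apply_succAbove, hsum]
          omega
        · intro i
          by_cases hij : i = j
          · subst hij; simp [Fin.insertNth_apply_same]
          · obtain ⟨k, rfl⟩ := Fin.exists_succAbove_eq hij
            simpa [Fin.insertNth_apply_succAbove] using hpos k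
        · simp [Fin.insertNth_apply_same]
      · intro g hg
        rw [Finset.mem_filter] at hg
        show j.insertNth 1 (j.removeNth g) = g
        rw [Fin.insertNth_removeNth]
        funext i
        by_cases hij : i = j
        · subst hij; rw [Function.update_self, hg.2]
        · rw [Function.update_of_ne hij]
      · intro f hf
        exact Fin.removeNth_insertNth (α := fun _ => ℕ) j 1 f
      · intro g hg
        rfl
  rw [Finset.sum_congr rfl (fun j _ => split j)]
  rw [Finset.sum_add_distrib]
  congr 1
  · rw [Finset.sum_comm, map_sum]
    refine Finset.sum_congr rfl fun f hf => ?_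
    rw [Pp, deriv_prod]
    refine Finset.sum_congr rfl fun j _ => ?_
    rw [hA]
    simp only
    rw [shiftS'_CX]
  · rw [Finset.sum_const]
    simp only [Finset.card_univ, Fintype.card_fin]
    rw [nsmul_eq_mul]
    have : ((n + 1 : ℕ) : MP) = C ((n : ℝ) + 1) := by
      push_cast
      simp [map_add, map_natCast]
    rw [this]


lemma shiftS'_Lpoly_zero (l : ℕ) : shiftS' (LpolyJet l 0) = 0 := by
  cases l with
  | zero => rw [Lpoly_zero_zero]; exact Derivation.map_one_eq_zero _
  | succ l => rw [Lpoly_succ_zero]; exact map_zero _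

lemma coeff1 (l k : ℕ) :
    ((Nat.factorial (l+1) : ℝ)) / (Nat.factorial (k+1) : ℝ)
      = ((l : ℝ) + 1) * ((Nat.factorial l : ℝ) / (Nat.factorial (k+1) : ℝ)) := by
  rw [Nat.factorial_succ]
  push_cast
  ring

lemma coeff2 (l k : ℕ) :
    ((Nat.factorial l : ℝ) / (Nat.factorial (k+1) : ℝ)) * ((k : ℝ) + 1)
      = (Nat.factorial l : ℝ) / (Nat.factorial k : ℝ) := by
  rw [Nat.factorial_succ]
  have h1 : ((k : ℝ) + 1) ≠ 0 := by positivity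
  have h2 : (Nat.factorial k : ℝ) ≠ 0 := Nat.cast_ne_zero.mpr (Nat.factorial_ne_zero k)
  push_cast
  field_simp



/-- Faà-di-Bruno-type identity (eq:lemma2_3): for a function `ξ(x, u)` of the base
jet variables, `(∑_J u⁽ᴶ⁺¹⁾∂_{u⁽ᴶ⁾})^l ξ = ∑_{n=0}^{l} (l!/n!) L^{(l)}_{(n)} ∂_u^n ξ`. -/
theorem shift_iterate_faa_di_bruno
    (p : ℕ) (ξ : MvPolynomial (Option ℕ) ℝ)
    (hξ : ξ ∈ Algebra.adjoin ℝ
      ({MvPolynomial.X none, MvPolynomial.X (some 0)} :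
        Set (MvPolynomial (Option ℕ) ℝ)))
    (l : ℕ) (hl : l ≤ p) :
    (shiftS'.toLinearMap ^ l) ξ
      = ∑ n ∈ Finset.range (l + 1),
          MvPolynomial.C ((Nat.factorial l : ℝ) / (Nat.factorial n : ℝ)) *
            (LpolyJet l n * (partialU.toLinearMap ^ n) ξ) := by
  clear hl
  induction l with
  | zero =>
    rw [Finset.sum_range_one, pow_zero, pow_zero, Lpoly_zero_zero]
    simp
  | succ l ih =>
    rw [pow_succ', Module.End.mul_apply, ih]
    have hcoe : ∀ q : MP, shiftS'.toLinearMap q = shiftS' q := fun _ => rfl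
    rw [hcoe, map_sum]
    have hterm : ∀ n ∈ Finset.range (l + 1),
        shiftS' (MvPolynomial.C ((Nat.factorial l : ℝ) / (Nat.factorial n : ℝ)) *
            (LpolyJet l n * (partialU.toLinearMap ^ n) ξ))
          = MvPolynomial.C ((Nat.factorial l : ℝ) / (Nat.factorial n : ℝ)) *
              (shiftS' (LpolyJet l n) * (partialU.toLinearMap ^ n) ξ)
            + MvPolynomial.C ((Nat.factorial l : ℝ) / (Nat.factorial n : ℝ)) *
              (LpolyJet l n *
                (MvPolynomial.X (some 1) * (partialU.toLinearMap ^ (n+1)) ξ)) := by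
      intro n _
      have hS : shiftS' ((partialU.toLinearMap ^ n) ξ)
          = MvPolynomial.X (some 1) * (partialU.toLinearMap ^ (n+1)) ξ := by
        rw [shiftS'_eq_on_adj (partialU_pow_mem_adj hξ n), pow_succ', Module.End.mul_apply]
        rfl
      rw [Derivation.leibniz, smul_eq_mul, smul_eq_mul, deriv_C, mul_zero, add_zero,
        Derivation.leibniz, smul_eq_mul, smul_eq_mul, hS]
      ring
    rw [Finset.sum_congr rfl hterm, Finset.sum_add_distrib]
    -- normal forms
    have hLHS1 : ∑ n ∈ Finset.range (l + 1),
        MvPolynomial.C ((Nat.factorial l : ℝ) / (Nat.factorial n : ℝ)) *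
          (shiftS' (LpolyJet l n) * (partialU.toLinearMap ^ n) ξ)
        = ∑ k ∈ Finset.range l,
            MvPolynomial.C ((Nat.factorial l : ℝ) / (Nat.factorial (k+1) : ℝ)) *
              (shiftS' (LpolyJet l (k+1)) * (partialU.toLinearMap ^ (k+1)) ξ) := by
      rw [Finset.sum_range_succ']
      rw [shiftS'_Lpoly_zero]
      simp
    rw [hLHS1]
    -- now the RHS
    conv_rhs => rw [Finset.sum_range_succ']
    have hT0 : MvPolynomial.C ((Nat.factorial (l+1) : ℝ) / (Nat.factorial 0 : ℝ)) *
        (LpolyJet (l+1) 0 * (partialU.toLinearMap ^ 0) ξ) = 0 := by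
      rw [Lpoly_succ_zero]; ring
    rw [hT0, add_zero]
    have hTsucc : ∀ k ∈ Finset.range (l + 1),
        MvPolynomial.C ((Nat.factorial (l+1) : ℝ) / (Nat.factorial (k+1) : ℝ)) *
            (LpolyJet (l+1) (k+1) * (partialU.toLinearMap ^ (k+1)) ξ)
          = MvPolynomial.C ((Nat.factorial l : ℝ) / (Nat.factorial (k+1) : ℝ)) *
              (shiftS' (LpolyJet l (k+1)) * (partialU.toLinearMap ^ (k+1)) ξ)
            + MvPolynomial.C ((Nat.factorial l : ℝ) / (Nat.factorial k : ℝ)) *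
              (LpolyJet l k *
                (MvPolynomial.X (some 1) * (partialU.toLinearMap ^ (k+1)) ξ)) := by
      intro k _
      have hrec := Lpoly_rec l k
      have hsplit : (MvPolynomial.C ((Nat.factorial (l+1) : ℝ) / (Nat.factorial (k+1) : ℝ)) : MP)
          = MvPolynomial.C ((Nat.factorial l : ℝ) / (Nat.factorial (k+1) : ℝ)) *
            MvPolynomial.C ((l : ℝ) + 1) := by
        rw [← map_mul]
        congr 1
        rw [coeff1]
        ring
      rw [hsplit, mul_assoc, ← mul_assoc (MvPolynomial.C ((l : ℝ) + 1)), hrec]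
      rw [add_mul, mul_add]
      congr 1
      have hc2 : (MvPolynomial.C ((Nat.factorial l : ℝ) / (Nat.factorial (k+1) : ℝ)) : MP) *
          MvPolynomial.C ((k : ℝ) + 1)
          = MvPolynomial.C ((Nat.factorial l : ℝ) / (Nat.factorial k : ℝ)) := by
        rw [← map_mul, coeff2]
      calc MvPolynomial.C ((Nat.factorial l : ℝ) / (Nat.factorial (k+1) : ℝ)) *
            (MvPolynomial.C ((k : ℝ) + 1) *
              (MvPolynomial.X (some 1) * LpolyJet l k) * (partialU.toLinearMap ^ (k+1)) ξ)
          = (MvPolynomial.C ((Nat.factorial l : ℝ) / (Nat.factorial (k+1) : ℝ)) *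
              MvPolynomial.C ((k : ℝ) + 1)) *
              (LpolyJet l k * (MvPolynomial.X (some 1) * (partialU.toLinearMap ^ (k+1)) ξ)) := by
            ring
        _ = _ := by rw [hc2]
    rw [Finset.sum_congr rfl hTsucc, Finset.sum_add_distrib]
    rw [add_left_inj]
    · rw [Finset.sum_range_succ]
      have : LpolyJet l (l+1) = 0 := Lpoly_eq_zero_of_lt (by omega)
      rw [this, map_zero]
      simp
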